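/- arXiv:math/0512418 — 6 statements merged into one kernel-verified Lean document; each statement's English description precedes it below -/
import Mathlib

section
/- The only integer solutions of y^4 + 2y^3 - 9x^2y^2 + 2xy - 15x - 7 = 0 are (x,y) = (-1,-4), (-1,-1), (-1,1), (-1,2). -/
lemma no_between (k m : ℤ) (hk : 0 ≤ k) : ¬ (k^2 < m^2 ∧ m^2 < (k+1)^2) := by
  rintro ⟨h1, h2⟩
  have h3 : k < |m| := by nlinarith [sq_abs m, abs_nonneg m]
  have h4 : |m| < k + 1 := by nlinarith [sq_abs m, abs_nonneg m]
  omega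

theorem integer_solutions_example2 (x y : ℤ) :
    y^4 + 2*y^3 - 9*x^2*y^2 + 2*x*y - 15*x - 7 = 0 ↔
      (x, y) = (-1, -4) ∨ (x, y) = (-1, -1) ∨ (x, y) = (-1, 1) ∨ (x, y) = (-1, 2) := by
  constructor
  · intro h
    have key : (18*y^2*x - 2*y + 15)^2 = 36*y^6 + 72*y^5 - 248*y^2 - 60*y + 225 := by
      linear_combination (-36*y^2) * h
    rcases lt_or_ge y 24 with hy1 | hy1
    · rcases lt_or_ge (-26) y with hy2 | hy2
      swap
      · exfalso
        have hyy : 0 ≤ (-y - 26) * y^2 :=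
          mul_nonneg (by omega) (sq_nonneg y)
        refine no_between (-(6*y^3+6*y^2-3*y+3)-1) (18*y^2*x - 2*y + 15) (by nlinarith [hyy]) ⟨?_, ?_⟩
        · nlinarith [key, hyy]
        · nlinarith [key, hyy, sq_nonneg (7*y - 24)]
      have hy3 : -25 ≤ y := by omega
      have hy4 : y ≤ 23 := by omega
      interval_cases y
      · exfalso
        have k2 : ((11250:ℤ)*x + 65)^2 = 8085784225 := by linear_combination key
        exact no_between 89920 _ (by norm_num) ⟨by rw [k2]; norm_num, by rw [k2]; norm_num⟩
      · exfalso
        have k2 : ((10368:ℤ)*x + 63)^2 = 6306257025 := by linear_combination key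
        exact no_between 79411 _ (by norm_num) ⟨by rw [k2]; norm_num, by rw [k2]; norm_num⟩
      · exfalso
        have k2 : ((9522:ℤ)*x + 61)^2 = 4865745721 := by linear_combination key
        exact no_between 69754 _ (by norm_num) ⟨by rw [k2]; norm_num, by rw [k2]; norm_num⟩
      · exfalso
        have k2 : ((8712:ℤ)*x + 59)^2 = 3710496553 := by linear_combination key
        exact no_between 60913 _ (by norm_num) ⟨by rw [k2]; norm_num, by rw [k2]; norm_num⟩
      · exfalso
        have k2 : ((7938:ℤ)*x + 57)^2 = 2793417201 := by linear_combination key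
        exact no_between 52852 _ (by norm_num) ⟨by rw [k2]; norm_num, by rw [k2]; norm_num⟩
      · exfalso
        have k2 : ((7200:ℤ)*x + 55)^2 = 2073502225 := by linear_combination key
        exact no_between 45535 _ (by norm_num) ⟨by rw [k2]; norm_num, by rw [k2]; norm_num⟩
      · exfalso
        have k2 : ((6498:ℤ)*x + 53)^2 = 1515284425 := by linear_combination key
        exact no_between 38926 _ (by norm_num) ⟨by rw [k2]; norm_num, by rw [k2]; norm_num⟩
      · exfalso
        have k2 : ((5832:ℤ)*x + 51)^2 = 1088312121 := by linear_combination key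
        exact no_between 32989 _ (by norm_num) ⟨by rw [k2]; norm_num, by rw [k2]; norm_num⟩
      · exfalso
        have k2 : ((5202:ℤ)*x + 49)^2 = 766652353 := by linear_combination key
        exact no_between 27688 _ (by norm_num) ⟨by rw [k2]; norm_num, by rw [k2]; norm_num⟩
      · exfalso
        have k2 : ((4608:ℤ)*x + 47)^2 = 528420001 := by linear_combination key
        exact no_between 22987 _ (by norm_num) ⟨by rw [k2]; norm_num, by rw [k2]; norm_num⟩
      · exfalso
        have k2 : ((4050:ℤ)*x + 45)^2 = 355332825 := by linear_combination key
        exact no_between 18850 _ (by norm_num) ⟨by rw [k2]; norm_num, by rw [k2]; norm_num⟩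
      · exfalso
        have k2 : ((3528:ℤ)*x + 43)^2 = 232292425 := by linear_combination key
        exact no_between 15241 _ (by norm_num) ⟨by rw [k2]; norm_num, by rw [k2]; norm_num⟩
      · exfalso
        have k2 : ((3042:ℤ)*x + 41)^2 = 146991121 := by linear_combination key
        exact no_between 12123 _ (by norm_num) ⟨by rw [k2]; norm_num, by rw [k2]; norm_num⟩
      · exfalso
        have k2 : ((2592:ℤ)*x + 39)^2 = 89544753 := by linear_combination key
        exact no_between 9462 _ (by norm_num) ⟨by rw [k2]; norm_num, by rw [k2]; norm_num⟩
      · exfalso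
        have k2 : ((2178:ℤ)*x + 37)^2 = 52151401 := by linear_combination key
        exact no_between 7221 _ (by norm_num) ⟨by rw [k2]; norm_num, by rw [k2]; norm_num⟩
      · exfalso
        have k2 : ((1800:ℤ)*x + 35)^2 = 28776025 := by linear_combination key
        exact no_between 5364 _ (by norm_num) ⟨by rw [k2]; norm_num, by rw [k2]; norm_num⟩
      · exfalso
        have k2 : (1458:ℤ)*x + 33 - 3855 = 0 ∨ (1458:ℤ)*x + 33 + 3855 = 0 := by
          rcases mul_eq_zero.mp (show ((1458:ℤ)*x + 33 - 3855) * ((1458:ℤ)*x + 33 + 3855) = 0 by linear_combination key) with h3 | h3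
          · exact Or.inl h3
          · exact Or.inr h3
        rcases k2 with h3 | h3 <;> omega
      · exfalso
        have k2 : ((1152:ℤ)*x + 31)^2 = 7062721 := by linear_combination key
        exact no_between 2657 _ (by norm_num) ⟨by rw [k2]; norm_num, by rw [k2]; norm_num⟩
      · exfalso
        have k2 : ((882:ℤ)*x + 29)^2 = 3013753 := by linear_combination key
        exact no_between 1736 _ (by norm_num) ⟨by rw [k2]; norm_num, by rw [k2]; norm_num⟩
      · exfalso
        have k2 : ((648:ℤ)*x + 27)^2 = 1111401 := by linear_combination key
        exact no_between 1054 _ (by norm_num) ⟨by rw [k2]; norm_num, by rw [k2]; norm_num⟩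
      · exfalso
        have k2 : ((450:ℤ)*x + 25)^2 = 331825 := by linear_combination key
        exact no_between 576 _ (by norm_num) ⟨by rw [k2]; norm_num, by rw [k2]; norm_num⟩
      · have k2 : (288:ℤ)*x + 23 - 265 = 0 ∨ (288:ℤ)*x + 23 + 265 = 0 := by
          rcases mul_eq_zero.mp (show ((288:ℤ)*x + 23 - 265) * ((288:ℤ)*x + 23 + 265) = 0 by linear_combination key) with h3 | h3
          · exact Or.inl h3
          · exact Or.inr h3
        have hx : x = -1 := by rcases k2 with h3 | h3 <;> omega
        subst hx
        norm_num
      · exfalso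
        have k2 : ((162:ℤ)*x + 21)^2 = 6921 := by linear_combination key
        exact no_between 83 _ (by norm_num) ⟨by rw [k2]; norm_num, by rw [k2]; norm_num⟩
      · exfalso
        have k2 : ((72:ℤ)*x + 19)^2 = -647 := by linear_combination key
        nlinarith [k2, sq_nonneg ((72:ℤ)*x + 19)]
      · have k2 : (18:ℤ)*x + 17 - 1 = 0 ∨ (18:ℤ)*x + 17 + 1 = 0 := by
          rcases mul_eq_zero.mp (show ((18:ℤ)*x + 17 - 1) * ((18:ℤ)*x + 17 + 1) = 0 by linear_combination key) with h3 | h3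
          · exact Or.inl h3
          · exact Or.inr h3
        have hx : x = -1 := by rcases k2 with h3 | h3 <;> omega
        subst hx
        norm_num
      · exfalso
        have hx : (15:ℤ)*x = -7 := by linear_combination -h
        omega
      · have k2 : (18:ℤ)*x + 13 - 5 = 0 ∨ (18:ℤ)*x + 13 + 5 = 0 := by
          rcases mul_eq_zero.mp (show ((18:ℤ)*x + 13 - 5) * ((18:ℤ)*x + 13 + 5) = 0 by linear_combination key) with h3 | h3
          · exact Or.inl h3
          · exact Or.inr h3
        have hx : x = -1 := by rcases k2 with h3 | h3 <;> omega
        subst hx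
        norm_num
      · have k2 : (72:ℤ)*x + 11 - 61 = 0 ∨ (72:ℤ)*x + 11 + 61 = 0 := by
          rcases mul_eq_zero.mp (show ((72:ℤ)*x + 11 - 61) * ((72:ℤ)*x + 11 + 61) = 0 by linear_combination key) with h3 | h3
          · exact Or.inl h3
          · exact Or.inr h3
        have hx : x = -1 := by rcases k2 with h3 | h3 <;> omega
        subst hx
        norm_num
      · exfalso
        have k2 : ((162:ℤ)*x + 9)^2 = 41553 := by linear_combination key
        exact no_between 203 _ (by norm_num) ⟨by rw [k2]; norm_num, by rw [k2]; norm_num⟩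
      · exfalso
        have k2 : ((288:ℤ)*x + 7)^2 = 217201 := by linear_combination key
        exact no_between 466 _ (by norm_num) ⟨by rw [k2]; norm_num, by rw [k2]; norm_num⟩
      · exfalso
        have k2 : ((450:ℤ)*x + 5)^2 = 781225 := by linear_combination key
        exact no_between 883 _ (by norm_num) ⟨by rw [k2]; norm_num, by rw [k2]; norm_num⟩
      · exfalso
        have k2 : ((648:ℤ)*x + 3)^2 = 2230425 := by linear_combination key
        exact no_between 1493 _ (by norm_num) ⟨by rw [k2]; norm_num, by rw [k2]; norm_num⟩
      · exfalso
        have k2 : ((882:ℤ)*x + 1)^2 = 5433121 := by linear_combination key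
        exact no_between 2330 _ (by norm_num) ⟨by rw [k2]; norm_num, by rw [k2]; norm_num⟩
      · exfalso
        have k2 : ((1152:ℤ)*x + -1)^2 = 11780353 := by linear_combination key
        exact no_between 3432 _ (by norm_num) ⟨by rw [k2]; norm_num, by rw [k2]; norm_num⟩
      · exfalso
        have k2 : ((1458:ℤ)*x + -3)^2 = 23363001 := by linear_combination key
        exact no_between 4833 _ (by norm_num) ⟨by rw [k2]; norm_num, by rw [k2]; norm_num⟩
      · exfalso
        have k2 : ((1800:ℤ)*x + -5)^2 = 43174825 := by linear_combination key
        exact no_between 6570 _ (by norm_num) ⟨by rw [k2]; norm_num, by rw [k2]; norm_num⟩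
      · exfalso
        have k2 : ((2178:ℤ)*x + -7)^2 = 75341425 := by linear_combination key
        exact no_between 8679 _ (by norm_num) ⟨by rw [k2]; norm_num, by rw [k2]; norm_num⟩
      · exfalso
        have k2 : ((2592:ℤ)*x + -9)^2 = 125375121 := by linear_combination key
        exact no_between 11197 _ (by norm_num) ⟨by rw [k2]; norm_num, by rw [k2]; norm_num⟩
      · exfalso
        have k2 : ((3042:ℤ)*x + -11)^2 = 200455753 := by linear_combination key
        exact no_between 14158 _ (by norm_num) ⟨by rw [k2]; norm_num, by rw [k2]; norm_num⟩
      · exfalso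
        have k2 : ((3528:ℤ)*x + -13)^2 = 309737401 := by linear_combination key
        exact no_between 17599 _ (by norm_num) ⟨by rw [k2]; norm_num, by rw [k2]; norm_num⟩
      · exfalso
        have k2 : ((4050:ℤ)*x + -15)^2 = 464681025 := by linear_combination key
        exact no_between 21556 _ (by norm_num) ⟨by rw [k2]; norm_num, by rw [k2]; norm_num⟩
      · exfalso
        have k2 : ((4608:ℤ)*x + -17)^2 = 679413025 := by linear_combination key
        exact no_between 26065 _ (by norm_num) ⟨by rw [k2]; norm_num, by rw [k2]; norm_num⟩
      · exfalso
        have k2 : ((5202:ℤ)*x + -19)^2 = 971109721 := by linear_combination key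
        exact no_between 31162 _ (by norm_num) ⟨by rw [k2]; norm_num, by rw [k2]; norm_num⟩
      · exfalso
        have k2 : ((5832:ℤ)*x + -21)^2 = 1360407753 := by linear_combination key
        exact no_between 36883 _ (by norm_num) ⟨by rw [k2]; norm_num, by rw [k2]; norm_num⟩
      · exfalso
        have k2 : ((6498:ℤ)*x + -23)^2 = 1871840401 := by linear_combination key
        exact no_between 43264 _ (by norm_num) ⟨by rw [k2]; norm_num, by rw [k2]; norm_num⟩
      · exfalso
        have k2 : ((7200:ℤ)*x + -25)^2 = 2534299825 := by linear_combination key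
        exact no_between 50341 _ (by norm_num) ⟨by rw [k2]; norm_num, by rw [k2]; norm_num⟩
      · exfalso
        have k2 : ((7938:ℤ)*x + -27)^2 = 3381525225 := by linear_combination key
        exact no_between 58150 _ (by norm_num) ⟨by rw [k2]; norm_num, by rw [k2]; norm_num⟩
      · exfalso
        have k2 : ((8712:ℤ)*x + -29)^2 = 4452616921 := by linear_combination key
        exact no_between 66727 _ (by norm_num) ⟨by rw [k2]; norm_num, by rw [k2]; norm_num⟩
      · exfalso
        have k2 : ((9522:ℤ)*x + -31)^2 = 5792576353 := by linear_combination key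
        exact no_between 76108 _ (by norm_num) ⟨by rw [k2]; norm_num, by rw [k2]; norm_num⟩
    · exfalso
      have hyy : 0 ≤ (y - 24) * y^2 :=
        mul_nonneg (by omega) (sq_nonneg y)
      refine no_between (6*y^3+6*y^2-3*y+3-1) (18*y^2*x - 2*y + 15) (by nlinarith [hyy]) ⟨?_, ?_⟩
      · nlinarith [key, hyy, sq_nonneg (7*y - 24)]
      · nlinarith [key, hyy, sq_nonneg (7*y - 24)]
  · rintro (h | h | h | h) <;>
      (rw [Prod.mk.injEq] at h; obtain ⟨rfl, rfl⟩ := h; norm_num)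
end

section
/- The only integer solution of (y^2 - x^3)(y^2 - 2x^3) + 2x^5 - 9xy - 3 = 0 is (x,y) = (2,3). -/
lemma mod27 (x y : ℤ) (h : (y^2 - x^3) * (y^2 - 2*x^3) + 2*x^5 - 9*x*y - 3 = 0) :
    x % 27 = 2 := by
  have key : ∀ a b : ZMod 27, (b^2-a^3)*(b^2-2*a^3)+2*a^5-9*a*b-3 = 0 → a = 2 := by decide
  have h27 : ((x : ZMod 27)) = 2 := by
    apply key _ (y : ZMod 27)
    have := congrArg (fun n : ℤ => (n : ZMod 27)) h
    push_cast at this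
    simpa using this
  have : ((x - 2 : ℤ) : ZMod 27) = 0 := by push_cast [h27]; ring
  have hd : (27 : ℤ) ∣ (x - 2) := by
    exact_mod_cast (ZMod.intCast_zmod_eq_zero_iff_dvd _ _).mp this
  omega

lemma smallx (x y : ℤ) (hx : x ≤ 0)
    (h : (y^2 - x^3) * (y^2 - 2*x^3) + 2*x^5 - 9*x*y - 3 = 0) : False := by
  rcases (by omega : x = 0 ∨ x = -1 ∨ x ≤ -2) with rfl | rfl | hx2
  · have hss : y^2 * y^2 = 3 := by linear_combination h
    have hs0 : (0:ℤ) ≤ y^2 := sq_nonneg y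
    rcases le_or_gt (y^2) 1 with hs | hs
    · nlinarith [mul_nonneg hs0 (by linarith : (0:ℤ) ≤ 1 - y^2)]
    · nlinarith [mul_nonneg (by linarith : (0:ℤ) ≤ y^2 - 2) hs0]
  · have hd : y ∣ 3 := ⟨y^3 + 3*y + 9, by linear_combination -h⟩
    have h1 : y ≤ 3 := Int.le_of_dvd (by norm_num) hd
    have h2 : -y ≤ 3 := Int.le_of_dvd (by norm_num) ((neg_dvd).mpr hd)
    have h2' : -3 ≤ y := by linarith
    interval_cases y <;> omega
  · have hx3 : (8:ℤ) ≤ -x^3 := by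
      nlinarith [mul_nonneg (by linarith : (0:ℤ) ≤ -x-2) (by positivity : (0:ℤ) ≤ x^2),
        mul_nonneg (by linarith : (0:ℤ) ≤ -x-2) (by linarith : (0:ℤ) ≤ -x)]
    have hx45 : (0:ℤ) ≤ x^6 + x^5 := by
      nlinarith [mul_nonneg (by positivity : (0:ℤ) ≤ x^4)
        (mul_nonneg (by linarith : (0:ℤ) ≤ -x-2) (by linarith : (0:ℤ) ≤ 1-x))]
    rcases lt_trichotomy y 0 with hy | rfl | hy
    · have hy1 : y ≤ -1 := by omega
      have hz : (0:ℤ) ≤ x^2*(-y) - 4 := by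
        nlinarith [mul_nonneg (by nlinarith : (0:ℤ) ≤ x^2 - 4) (by linarith : (0:ℤ) ≤ -y)]
      nlinarith [mul_nonneg (mul_nonneg (by linarith : (0:ℤ) ≤ -x) (by linarith : (0:ℤ) ≤ -y)) hz,
        sq_nonneg (y^2 - 1), hx45]
    · obtain ⟨t, ht⟩ : ∃ t : ℤ, t = x^6 + x^5 := ⟨_, rfl⟩
      have : 2*t = 3 := by rw [ht]; linear_combination h
      omega
    · have hy1 : 1 ≤ y := hy
      nlinarith [mul_nonneg (by linarith : (0:ℤ) ≤ -x^3 - 8) (sq_nonneg y),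
        mul_nonneg (by linarith : (0:ℤ) ≤ -x-2) (by linarith : (0:ℤ) ≤ y),
        sq_nonneg (y^2 - 1), hx45]

lemma nosq (y N m : ℤ) (hm0 : 0 ≤ m) (h1 : N - 6 ≤ y^2) (h2 : y^2 ≤ N + 6)
    (hm : m^2 < N - 6) (hm2 : N + 6 < (m+1)^2) : False := by
  have hlt : y^2 < (m+1)^2 := by linarith
  have hy1 : y < m + 1 := by nlinarith [sq_nonneg (y - (m+1))]
  have hy2 : -(m+1) < y := by nlinarith [sq_nonneg (y + (m+1))]
  nlinarith [mul_nonneg (by linarith : (0:ℤ) ≤ m - y) (by linarith : (0:ℤ) ≤ m + y)]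

lemma xtwo (y : ℤ) (h : (y^2 - 2^3) * (y^2 - 2*2^3) + 2*2^5 - 9*2*y - 3 = 0) : y = 3 := by
  have h' : y^4 - 24*y^2 - 18*y + 189 = 0 := by linear_combination h
  have h5 : y ≤ 5 := by
    by_contra hc
    push_neg at hc
    nlinarith [sq_nonneg (y^2 - 25), mul_nonneg (by linarith : (0:ℤ) ≤ y - 6) (by linarith : (0:ℤ) ≤ y), sq_nonneg y]
  have h5' : -5 ≤ y := by
    by_contra hc
    push_neg at hc
    nlinarith [mul_nonneg (by linarith : (0:ℤ) ≤ -y-6) (by linarith : (0:ℤ) ≤ 6 - y), sq_nonneg y, sq_nonneg (y^2-24)]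
  interval_cases y <;> omega

lemma ybound (x y : ℤ) (hx : 2 ≤ x) (h : (y^2 - x^3) * (y^2 - 2*x^3) + 2*x^5 - 9*x*y - 3 = 0) :
    y^2 ≤ 2*x^3 + x + 1 := by
  by_contra hc
  push_neg at hc
  have hs : 0 ≤ y^2 - 2*x^3 - x - 2 := by linarith
  have hx0 : (0:ℤ) ≤ x := by linarith
  have h2 : (4:ℤ) ≤ x^2 := by nlinarith
  have h4 : (16:ℤ) ≤ x^4 := by nlinarith
  have hpos : 0 < 4*x^5 + 4*x^3 + x^2 - 75*x + 2 := by
    nlinarith [mul_nonneg hx0 (by linarith : (0:ℤ) ≤ x^4 - 16),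
      mul_nonneg hx0 (by linarith : (0:ℤ) ≤ x^2 - 4)]
  nlinarith [mul_nonneg hx0 (sq_nonneg (y - 9)),
    mul_nonneg hs (by nlinarith : (0:ℤ) ≤ 2*x^3 + 3*x + 8),
    sq_nonneg (y^2 - 2*x^3 - x - 2), hpos]

lemma absorb (A B M R : ℤ) (hBA : B = A + M) (hab : A * B = R)
    (hA7 : A ≤ -7 ∨ 7 ≤ A) (hB7 : B ≤ -7 ∨ 7 ≤ B) (hM : 0 < M) :
    7*M + 49 ≤ R ∨ R ≤ -7*M + 49 := by
  rcases hA7 with hA7 | hA7 <;> rcases hB7 with hB7 | hB7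
  · exact Or.inl (by nlinarith [mul_nonneg (by linarith : (0:ℤ) ≤ -A - M - 7) (by linarith : (0:ℤ) ≤ -B - 7)])
  · exact Or.inr (by nlinarith [mul_nonneg (by linarith : (0:ℤ) ≤ -A - 7) (by linarith : (0:ℤ) ≤ B - 7)])
  · linarith
  · exact Or.inl (by nlinarith [mul_nonneg (by linarith : (0:ℤ) ≤ A - 7) (by linarith : (0:ℤ) ≤ B - M - 7)])

lemma tri (x y A B : ℤ) (hx : 29 ≤ x)
    (hA : A = y^2 - 2*x^3 + 2*x^2 + 4*x + 16)
    (hB : B = y^2 - x^3 - 2*x^2 - 4*x - 16)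
    (h : (y^2 - x^3) * (y^2 - 2*x^3) + 2*x^5 - 9*x*y - 3 = 0)
    (hy : y^2 ≤ 2*x^3 + x + 1) :
    (-6 ≤ A ∧ A ≤ 6) ∨ (-6 ≤ B ∧ B ≤ 6) := by
  have hx0 : (0:ℤ) < x := by linarith
  have hab : A * B = 9*x*y - 80*x^2 - 128*x - 253 := by
    subst hA hB; linear_combination h
  have hBA : B = A + (x^3 - 4*x^2 - 8*x - 32) := by subst hA hB; ring
  have hM : 0 < x^3 - 4*x^2 - 8*x - 32 := by nlinarith
  have hsq : (9*x*y)^2 ≤ 81*x^2*(2*x^3 + x + 1) := by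
    nlinarith [mul_le_mul_of_nonneg_left hy (by positivity : (0:ℤ) ≤ 81*x^2)]
  have hquad : (0:ℤ) ≤ 49*x^2 - 1674*x + 9088 := by nlinarith [sq_nonneg (x - 29)]
  have hx2 : (0:ℤ) < x^2 := by positivity
  have hx3 : (0:ℤ) < x^3 := by positivity
  have hx4 : (0:ℤ) < x^4 := by positivity
  have hx5 : (0:ℤ) < x^5 := by positivity
  have hx6 : (0:ℤ) < x^6 := by positivity
  have hD1 : (0:ℤ) < 49*x^6 + 566*x^5 + 3712*x^4 + 8499*x^3 + 13215*x^2 + 11232*x + 6084 := by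
    linarith
  have hD2 : (0:ℤ) < 49*x^6 - 1674*x^5 + 9088*x^4 + 32299*x^3 + 147391*x^2 + 193568*x + 276676 := by
    nlinarith [mul_nonneg (le_of_lt hx4) hquad]
  have hL1pos : (0:ℤ) ≤ 7*x^3 + 52*x^2 + 72*x + 78 := by linarith
  have hL2pos : (0:ℤ) ≤ 7*x^3 - 108*x^2 - 184*x - 526 := by
    nlinarith [mul_nonneg (sq_nonneg x) (by linarith : (0:ℤ) ≤ x - 29),
      mul_nonneg (le_of_lt hx0) (by linarith : (0:ℤ) ≤ x - 29)]
  by_contra hcon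
  push_neg at hcon
  obtain ⟨hA', hB'⟩ := hcon
  have hA7 : A ≤ -7 ∨ 7 ≤ A := by
    rcases lt_or_ge A (-6) with h1 | h1
    · exact Or.inl (by omega)
    · exact Or.inr (by have := hA' h1; omega)
  have hB7 : B ≤ -7 ∨ 7 ≤ B := by
    rcases lt_or_ge B (-6) with h1 | h1
    · exact Or.inl (by omega)
    · exact Or.inr (by have := hB' h1; omega)
  rcases absorb A B _ _ hBA hab hA7 hB7 hM with hc | hc
  · -- 9xy ≥ L1
    have h9 : 7*x^3 + 52*x^2 + 72*x + 78 ≤ 9*x*y := by linarith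
    have h90 : (0:ℤ) ≤ 9*x*y := le_trans hL1pos h9
    have hmul := mul_le_mul h9 h9 hL1pos h90
    nlinarith [hmul, hsq, hD1]
  · -- 9xy ≤ -L2
    have h9' : 7*x^3 - 108*x^2 - 184*x - 526 ≤ -(9*x*y) := by linarith
    have hmul := mul_le_mul h9' h9' hL2pos (le_trans hL2pos h9')
    nlinarith [hmul, hsq, hD2]

lemma bigx (x y : ℤ) (hx : 110 ≤ x) (h27 : x % 27 = 2)
    (h : (y^2 - x^3) * (y^2 - 2*x^3) + 2*x^5 - 9*x*y - 3 = 0) : False := by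
  have hy := ybound x y (by linarith) h
  rcases tri x y _ _ (by linarith) rfl rfl h hy with ⟨h1, h2⟩ | ⟨h1, h2⟩
  · set A := y^2 - 2*x^3 + 2*x^2 + 4*x + 16 with hA
    have hdvd : x ∣ A^2 - 32*A + 253 :=
      ⟨9*y - A*x^2 + 4*A*x + 8*A - 80*x - 128, by rw [hA]; linear_combination h⟩
    have hcpos : 0 < A^2 - 32*A + 253 := by nlinarith [sq_nonneg (A - 16)]
    have hle : x ≤ A^2 - 32*A + 253 := Int.le_of_dvd hcpos hdvd
    have hub : A^2 - 32*A + 253 ≤ 481 := by nlinarith [mul_nonneg (by linarith : (0:ℤ) ≤ A + 6) (by linarith : (0:ℤ) ≤ 38 - A)]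
    obtain ⟨k, rfl⟩ : ∃ k, x = 27*k + 2 := ⟨(x-2)/27, by omega⟩
    have hk : 4 ≤ k ∧ k ≤ 17 := by omega
    clear_value A
    obtain ⟨hk1, hk2⟩ := hk
    interval_cases k <;> interval_cases A <;> omega
  · set B := y^2 - x^3 - 2*x^2 - 4*x - 16 with hB
    have hdvd : x ∣ B^2 + 32*B + 253 :=
      ⟨9*y + B*x^2 - 4*B*x - 8*B - 80*x - 128, by rw [hB]; linear_combination h⟩
    have hcpos : 0 < B^2 + 32*B + 253 := by nlinarith [sq_nonneg (B + 16)]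
    have hle : x ≤ B^2 + 32*B + 253 := Int.le_of_dvd hcpos hdvd
    have hub : B^2 + 32*B + 253 ≤ 481 := by nlinarith [mul_nonneg (by linarith : (0:ℤ) ≤ B + 38) (by linarith : (0:ℤ) ≤ 6 - B)]
    obtain ⟨k, rfl⟩ : ∃ k, x = 27*k + 2 := ⟨(x-2)/27, by omega⟩
    have hk : 4 ≤ k ∧ k ≤ 17 := by omega
    clear_value B
    obtain ⟨hk1, hk2⟩ := hk
    interval_cases k <;> interval_cases B <;> omega

lemma x29 (y : ℤ) (h : (y^2 - 29^3) * (y^2 - 2*29^3) + 2*29^5 - 9*29*y - 3 = 0) : False := by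
  have hy := ybound 29 y (by norm_num) h
  rcases tri 29 y _ _ (by norm_num) rfl rfl h hy with ⟨h1, h2⟩ | ⟨h1, h2⟩
  · exact nosq y 46964 216 (by norm_num) (by linarith) (by linarith) (by norm_num) (by norm_num)
  · exact nosq y 26203 161 (by norm_num) (by linarith) (by linarith) (by norm_num) (by norm_num)

lemma x56 (y : ℤ) (h : (y^2 - 56^3) * (y^2 - 2*56^3) + 2*56^5 - 9*56*y - 3 = 0) : False := by
  have hy := ybound 56 y (by norm_num) h
  rcases tri 56 y _ _ (by norm_num) rfl rfl h hy with ⟨h1, h2⟩ | ⟨h1, h2⟩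
  · exact nosq y 344720 587 (by norm_num) (by linarith) (by linarith) (by norm_num) (by norm_num)
  · exact nosq y 182128 426 (by norm_num) (by linarith) (by linarith) (by norm_num) (by norm_num)

lemma x83 (y : ℤ) (h : (y^2 - 83^3) * (y^2 - 2*83^3) + 2*83^5 - 9*83*y - 3 = 0) : False := by
  have hy := ybound 83 y (by norm_num) h
  rcases tri 83 y _ _ (by norm_num) rfl rfl h hy with ⟨h1, h2⟩ | ⟨h1, h2⟩
  · exact nosq y 1129448 1062 (by norm_num) (by linarith) (by linarith) (by norm_num) (by norm_num)
  · exact nosq y 585913 765 (by norm_num) (by linarith) (by linarith) (by norm_num) (by norm_num)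

theorem integer_solutions_example3 (x y : ℤ) :
    (y^2 - x^3) * (y^2 - 2*x^3) + 2*x^5 - 9*x*y - 3 = 0 ↔ (x, y) = (2, 3) := by
  constructor
  · intro h
    have h27 := mod27 x y h
    have hx0 : 1 ≤ x := by
      by_contra hc
      push_neg at hc
      exact smallx x y (by linarith) h
    rcases (by omega : x = 2 ∨ x = 29 ∨ x = 56 ∨ x = 83 ∨ 110 ≤ x) with rfl | rfl | rfl | rfl | hb
    · have := xtwo y h
      subst this
      rfl
    · exact (x29 y h).elim
    · exact (x56 y h).elim
    · exact (x83 y h).elim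
    · exact (bigx x y hb h27 h).elim
  · intro h
    rw [Prod.mk.injEq] at h
    obtain ⟨rfl, rfl⟩ := h
    norm_num
end

section
/- There are no integers x, y satisfying simultaneously 2y(y^2 - 2x^2) + 2x^2 - 3y^2 + 8 = 0 and y^6 - 2y^5 - 4x^4y^2 + 17x^2y + 4x - 18 = 0. -/
theorem no_common_solution_F_P1_example1 :
    ¬ ∃ x y : ℤ, 2*y*(y^2 - 2*x^2) + 2*x^2 - 3*y^2 + 8 = 0 ∧
      y^6 - 2*y^5 - 4*x^4*y^2 + 17*x^2*y + 4*x - 18 = 0 := by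
  rintro ⟨x, y, h1, h2⟩
  have c1 : ((2*y*(y^2 - 2*x^2) + 2*x^2 - 3*y^2 + 8 : ℤ) : ZMod 4) = 0 := by
    rw [h1]; simp
  have c2 : ((y^6 - 2*y^5 - 4*x^4*y^2 + 17*x^2*y + 4*x - 18 : ℤ) : ZMod 4) = 0 := by
    rw [h2]; simp
  push_cast at c1 c2
  revert c1 c2
  generalize (x : ZMod 4) = a
  generalize (y : ZMod 4) = b
  revert a b
  decide
end

section
/- For each k ∈ {0, 1, 2}, there are no integers x, y with 2y^3 + 15y^2 = k and y^4 + 2y^3 - 9x^2y^2 + 2xy - 15x - 7 = 0. -/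
theorem no_common_solution_F_P3_example2 (k : ℤ) (hk : k = 0 ∨ k = 1 ∨ k = 2) :
    ¬ ∃ x y : ℤ, 2*y^3 + 15*y^2 = k ∧
      y^4 + 2*y^3 - 9*x^2*y^2 + 2*x*y - 15*x - 7 = 0 := by
  rintro ⟨x, y, h1, h2⟩
  have hk0 : (0:ℤ) ≤ k := by omega
  have hk2 : k ≤ 2 := by omega
  have hub : y ≤ 0 := by nlinarith [sq_nonneg y, sq_nonneg (y - 1), sq_nonneg (y + 1)]
  have hlb : -8 < y := by nlinarith [sq_nonneg y, sq_nonneg (y + 8)]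
  interval_cases y <;> norm_num at h1 h2 <;> omega
end

section
/- For each integer k with 0 ≤ k ≤ 4, the system x^3 - y^2 + 2x^2 + 4x + 16 + k = 0 and (y^2 - x^3)(y^2 - 2x^3) + 2x^5 - 9xy - 3 = 0 has no integer solutions. -/
theorem no_common_solution_F_P1_example3 (k : ℤ) (hk0 : 0 ≤ k) (hk4 : k ≤ 4) :
    ¬ ∃ x y : ℤ, x^3 - y^2 + 2*x^2 + 4*x + 16 + k = 0 ∧
      (y^2 - x^3) * (y^2 - 2*x^3) + 2*x^5 - 9*x*y - 3 = 0 := by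
  rintro ⟨x, y, h1, h2⟩
  interval_cases k <;>
  · have H1 := congrArg (fun n : ℤ => (n : ZMod 9)) h1
    have H2 := congrArg (fun n : ℤ => (n : ZMod 9)) h2
    push_cast at H1 H2
    revert H1 H2
    generalize (x : ZMod 9) = a
    generalize (y : ZMod 9) = b
    revert a b
    decide
end

section
/- For each integer k with 0 ≤ k ≤ 4, the system y^2 - 2x^3 + 2x^2 + 4x + 16 + k = 0 and (y^2 - x^3)(y^2 - 2x^3) + 2x^5 - 9xy - 3 = 0 has no integer solutions. -/
theorem no_common_solution_F_P2_example3 (k : ℤ) (hk0 : 0 ≤ k) (hk4 : k ≤ 4) :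
    ¬ ∃ x y : ℤ, y^2 - 2*x^3 + 2*x^2 + 4*x + 16 + k = 0 ∧
      (y^2 - x^3) * (y^2 - 2*x^3) + 2*x^5 - 9*x*y - 3 = 0 := by
  rintro ⟨x, y, h1, h2⟩
  interval_cases k <;>
  · have h1' := congrArg (Int.cast : ℤ → ZMod 6) h1
    have h2' := congrArg (Int.cast : ℤ → ZMod 6) h2
    push_cast at h1' h2'
    revert h1' h2'
    generalize (x : ZMod 6) = a
    generalize (y : ZMod 6) = b
    revert a b
    decide
end
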